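/- Let n = 2m−1 with m ≥ 2 and j ∈ {1,…,m}. Then: (i) T_hᵀ·F_j = 0 for every h ∈ {1,…,n+1} with h < m−j+1; and (ii) T_{m−j+1}ᵀ·F_j = c(n−2)·q^{m−1}·(v(n)·I − J), where I is the identity matrix and J the all-ones matrix, both indexed by the points of F_q^{n+1}. -/

import Mathlib

open Module Submodule
open scoped Classical
set_option linter.unusedSectionVars false
set_option maxHeartbeats 1600000
set_option synthInstance.maxHeartbeats 1000000

section SecA


variable {F : Type} [Field F] [Fintype F] {V : Type} [AddCommGroup V] [Module F V] [Fintype V]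
  [FiniteDimensional F V]

lemma card_submodule (X : Submodule F V) : Fintype.card X = Fintype.card F ^ finrank F X :=
  card_eq_pow_finrank

/-- number of 1-dim subspaces -/
lemma card_points_mul (d : ℕ) (hd : finrank F V = d) :
    Fintype.card {X : Submodule F V // finrank F X = 1} * (Fintype.card F - 1)
      = Fintype.card F ^ d - 1 := by
  have hfib : ∀ X : {X : Submodule F V // finrank F X = 1},
      Fintype.card {v : {v : V // v ≠ 0} // (span F {v.1} : Submodule F V) = X.1}
        = Fintype.card F - 1 := by
    intro X
    have he : {v : {v : V // v ≠ 0} // (span F {v.1} : Submodule F V) = X.1}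
        ≃ {w : X.1 // w ≠ 0} :=
      { toFun := fun v => ⟨⟨v.1.1, le_of_eq v.2 (mem_span_singleton_self v.1.1)⟩,
          fun hc => v.1.2 (by simpa using congrArg Subtype.val hc)⟩
        invFun := fun w => ⟨⟨w.1.1, fun hc => w.2 (Subtype.ext hc)⟩,
          Submodule.eq_of_le_of_finrank_eq
            ((span_singleton_le_iff_mem _ _).mpr w.1.2)
            (by rw [X.2]; exact finrank_span_singleton (fun hc => w.2 (Subtype.ext hc)))⟩
        left_inv := fun v => rfl
        right_inv := fun w => rfl }
    rw [Fintype.card_congr he]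
    rw [Fintype.card_subtype_compl (p := fun w : X.1 => w = 0),
      Fintype.card_subtype_eq (0 : X.1), card_submodule, X.2, pow_one]
  have key : Fintype.card {v : V // v ≠ 0}
      = Fintype.card {X : Submodule F V // finrank F X = 1} * (Fintype.card F - 1) := by
    have e := Equiv.sigmaFiberEquiv
      (fun v : {v : V // v ≠ 0} =>
        (⟨span F {v.1}, finrank_span_singleton v.2⟩ : {X : Submodule F V // finrank F X = 1}))
    rw [← Fintype.card_congr e, Fintype.card_sigma]
    have heq : ∀ X : {X : Submodule F V // finrank F X = 1},
        Fintype.card {v : {v : V // v ≠ 0} //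
          (⟨span F {v.1}, finrank_span_singleton v.2⟩ :
            {X : Submodule F V // finrank F X = 1}) = X} = Fintype.card F - 1 := by
      intro X
      rw [← hfib X]
      apply Fintype.card_congr
      exact Equiv.subtypeEquivRight (fun v => by
        constructor
        · intro hc; exact congrArg Subtype.val hc
        · intro hc; exact Subtype.ext hc)
    simp only [heq, Finset.sum_const, smul_eq_mul, Finset.card_univ]
  have hnz : Fintype.card {v : V // v ≠ 0} = Fintype.card F ^ d - 1 := by
    rw [Fintype.card_subtype_compl (p := fun v : V => v = 0),
      Fintype.card_subtype_eq (0 : V), ← hd, card_eq_pow_finrank (K := F)]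
  rw [← key, hnz]

lemma geom_nat (q : ℕ) (hq : 1 < q) (d : ℕ) :
    (∑ i ∈ Finset.range d, q ^ i) * (q - 1) = q ^ d - 1 := by
  induction d with
  | zero => simp
  | succ d ih =>
    rw [Finset.sum_range_succ, add_mul, ih]
    have h1 : 1 ≤ q ^ d := Nat.one_le_pow _ _ (by omega)
    have h2 : q ^ d * (q - 1) = q ^ (d+1) - q ^ d := by
      rw [Nat.mul_sub, mul_one, ← pow_succ]
    have h3 : q ^ d ≤ q ^ (d+1) := Nat.pow_le_pow_right (by omega) (by omega)
    omega

lemma card_points (d : ℕ) (hd : finrank F V = d) :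
    Fintype.card {X : Submodule F V // finrank F X = 1}
      = ∑ i ∈ Finset.range d, Fintype.card F ^ i := by
  have h := card_points_mul (F := F) (V := V) d hd
  have hg := geom_nat (Fintype.card F) Fintype.one_lt_card d
  have heq : Fintype.card {X : Submodule F V // finrank F X = 1} * (Fintype.card F - 1)
      = (∑ i ∈ Finset.range d, Fintype.card F ^ i) * (Fintype.card F - 1) := by rw [h, hg]
  have hpos : 0 < Fintype.card F - 1 := by have := Fintype.one_lt_card (α := F); omega
  exact Nat.eq_of_mul_eq_mul_right hpos heq

end SecA
section SecB

variable {F : Type} [Field F] [Fintype F] {V : Type} [AddCommGroup V] [Module F V] [Fintype V]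
  [FiniteDimensional F V]


/-- Points inside a subspace `W`. -/
lemma card_points_le (W : Submodule F V) :
    Fintype.card {X : Submodule F V // finrank F X = 1 ∧ X ≤ W}
      = ∑ i ∈ Finset.range (finrank F W), Fintype.card F ^ i := by
  have e : {X : Submodule F V // finrank F X = 1 ∧ X ≤ W}
      ≃ {Z : Submodule F W // finrank F Z = 1} :=
    { toFun := fun X => ⟨comap W.subtype X.1, by
        have : finrank F (comap W.subtype X.1) = finrank F X.1 :=
          LinearEquiv.finrank_eq (comapSubtypeEquivOfLe X.2.2)
        rw [this, X.2.1]⟩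
      invFun := fun Z => ⟨map W.subtype Z.1, by
        constructor
        · exact (LinearEquiv.finrank_eq
            (equivMapOfInjective W.subtype W.injective_subtype Z.1)).symm.trans Z.2
        · exact map_subtype_le W Z.1⟩
      left_inv := fun X => by
        apply Subtype.ext
        simp only
        rw [map_comap_subtype]
        exact inf_eq_right.mpr X.2.2
      right_inv := fun Z => by
        apply Subtype.ext
        simp only
        exact comap_map_eq_of_injective W.injective_subtype Z.1 }
  rw [Fintype.card_congr e]
  exact card_points (finrank F W) rfl

end SecB
section SecC

variable {F : Type} [Field F] [Fintype F]

/-- Complete flags (with `d` the dimension of `V`). -/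
def FlagG (F V : Type) [Field F] [AddCommGroup V] [Module F V] (d : ℕ) : Type :=
  {U : Fin (d + 1) → Submodule F V //
    Monotone U ∧ ∀ k : Fin (d + 1), finrank F (U k) = (k : ℕ)}

instance (V : Type) [AddCommGroup V] [Module F V] [Fintype V] (d : ℕ) :
    Finite (FlagG F V d) := by
  unfold FlagG; infer_instance

noncomputable instance (V : Type) [AddCommGroup V] [Module F V] [Fintype V] (d : ℕ) :
    Fintype (FlagG F V d) := Fintype.ofFinite _

/-- number of flags, as a function of `q` and the dimension `d` -/
def Nfl (q d : ℕ) : ℕ := ∏ k ∈ Finset.range d, (∑ i ∈ Finset.range (k + 1), q ^ i)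

section RankLemmas

variable {V : Type} [AddCommGroup V] [Module F V] [Fintype V]

lemma finrank_map_mkQ_add (X W : Submodule F V) (h : X ≤ W) :
    finrank F (map X.mkQ W) + finrank F X = finrank F W := by
  have h1 := LinearMap.finrank_range_add_finrank_ker (X.mkQ.domRestrict W)
  rw [LinearMap.range_domRestrict, LinearMap.ker_domRestrict, Submodule.ker_mkQ] at h1
  rw [← h1]
  congr 1
  exact (LinearEquiv.finrank_eq (comapSubtypeEquivOfLe h)).symm

lemma le_comap_mkQ' (X : Submodule F V) (W : Submodule F (V ⧸ X)) : X ≤ comap X.mkQ W := by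
  intro x hx
  simp [(Submodule.Quotient.mk_eq_zero X).mpr hx]

lemma finrank_comap_mkQ (X : Submodule F V) (W : Submodule F (V ⧸ X)) :
    finrank F (comap X.mkQ W) = finrank F W + finrank F X := by
  have h1 := finrank_map_mkQ_add X (comap X.mkQ W) (le_comap_mkQ' X W)
  rw [Submodule.map_comap_eq_of_surjective (Submodule.mkQ_surjective X) W] at h1
  omega

end RankLemmas

section FlagCount

variable {V : Type} [AddCommGroup V] [Module F V] [Fintype V]

lemma flag_zero_eq_bot (c : FlagG F V 0) (k : Fin 1) : c.1 k = ⊥ := by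
  have h := c.2.2 k
  have : (k : ℕ) = 0 := by omega
  rw [this] at h
  exact Submodule.finrank_eq_zero.mp h

lemma card_flag_zero : Fintype.card (FlagG F V 0) = 1 := by
  rw [Fintype.card_eq_one_iff]
  refine ⟨⟨fun _ => ⊥, monotone_const, fun k => by
    have : (k : ℕ) = 0 := by omega
    rw [this]; exact finrank_bot F V⟩, fun c => ?_⟩
  apply Subtype.ext
  funext k
  rw [flag_zero_eq_bot c k]

/-- The fiber of flags with `U 1 = X` is equivalent to flags of the quotient. -/
noncomputable def flagFiberEquiv {d : ℕ} (X : Submodule F V) (hX : finrank F X = 1) :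
    {c : FlagG F V (d + 1) // c.1 1 = X} ≃ FlagG F (V ⧸ X) d where
  toFun c := ⟨fun k => map X.mkQ (c.1.1 k.succ), by
      constructor
      · intro a b hab
        exact Submodule.map_mono (c.1.2.1 (by simpa using hab))
      · intro k
        have hle : X ≤ c.1.1 k.succ :=
          (le_of_eq c.2.symm).trans (c.1.2.1 (by simp [Fin.le_def]))
        have := finrank_map_mkQ_add X (c.1.1 k.succ) hle
        rw [hX, c.1.2.2 k.succ] at this
        simpa using Nat.succ_injective (by simpa using this)⟩
  invFun W := ⟨⟨fun k => Fin.cases ⊥ (fun l => comap X.mkQ (W.1 l)) k, by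
      constructor
      · intro a b hab
        induction a using Fin.cases with
        | zero => simp
        | succ a =>
          induction b using Fin.cases with
          | zero =>
            exfalso
            rw [Fin.le_def] at hab
            simp at hab
          | succ b =>
            simp only [Fin.cases_succ]
            exact Submodule.comap_mono (W.2.1 (by
              rw [Fin.le_def] at hab ⊢
              simpa using hab))
      · intro k
        induction k using Fin.cases with
        | zero => simp [finrank_bot]; exact finrank_bot F V
        | succ k =>
          simp only [Fin.cases_succ]
          refine (finrank_comap_mkQ X (W.1 k)).trans ?_
          rw [hX, W.2.2 k]
          simp⟩, by
      have h0 : (1 : Fin (d + 2)) = (0 : Fin (d + 1)).succ := by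
        simp [Fin.ext_iff]
      simp only [h0, Fin.cases_succ]
      have : W.1 0 = ⊥ := by
        have h := W.2.2 0
        simpa using Submodule.finrank_eq_zero.mp (by simpa using h)
      rw [this]
      simpa using Submodule.ker_mkQ X⟩
  left_inv c := by
    apply Subtype.ext
    apply Subtype.ext
    funext k
    induction k using Fin.cases with
    | zero =>
      simp only [Fin.cases_zero]
      symm
      exact Submodule.finrank_eq_zero.mp (by simpa using c.1.2.2 0)
    | succ k =>
      simp only [Fin.cases_succ]
      rw [Submodule.comap_map_mkQ]
      apply sup_eq_right.mpr
      exact (le_of_eq c.2.symm).trans (c.1.2.1 (by simp [Fin.le_def]))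
  right_inv W := by
    apply Subtype.ext
    funext k
    simp only [Fin.cases_succ]
    exact Submodule.map_comap_eq_of_surjective (Submodule.mkQ_surjective X) (W.1 k)

lemma card_flagG :
    ∀ (d : ℕ) (V : Type) [AddCommGroup V] [Module F V] [Fintype V],
      finrank F V = d → Fintype.card (FlagG F V d) = Nfl (Fintype.card F) d := by
  intro d
  induction d with
  | zero => intro V _ _ _ _; rw [card_flag_zero]; rfl
  | succ d ih =>
    intro V _ _ _ hd
    -- fibration over the point U 1
    have e := Equiv.sigmaFiberEquiv
      (fun c : FlagG F V (d + 1) =>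
        (⟨c.1 1, by simpa using c.2.2 1⟩ : {X : Submodule F V // finrank F X = 1}))
    rw [← Fintype.card_congr e, Fintype.card_sigma]
    have hfib : ∀ X : {X : Submodule F V // finrank F X = 1},
        Fintype.card {c : FlagG F V (d + 1) //
          (⟨c.1 1, by simpa using c.2.2 1⟩ : {X : Submodule F V // finrank F X = 1}) = X}
          = Nfl (Fintype.card F) d := by
      intro X
      have e1 : {c : FlagG F V (d + 1) //
          (⟨c.1 1, by simpa using c.2.2 1⟩ : {X : Submodule F V // finrank F X = 1}) = X}
          ≃ {c : FlagG F V (d + 1) // c.1 1 = X.1} :=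
        Equiv.subtypeEquivRight (fun c => by
          constructor
          · intro hc; exact congrArg Subtype.val hc
          · intro hc; exact Subtype.ext hc)
      rw [Fintype.card_congr (e1.trans (flagFiberEquiv X.1 X.2))]
      apply ih
      have := Submodule.finrank_quotient_add_finrank X.1
      rw [hd, X.2] at this
      omega
    simp only [hfib, Finset.sum_const, smul_eq_mul, Finset.card_univ]
    rw [card_points (d + 1) hd]
    unfold Nfl
    rw [Finset.prod_range_succ]
    exact mul_comm _ _
end FlagCount

end SecC
section SecD

variable {F : Type} [Field F] {V : Type} [AddCommGroup V] [Module F V] [FiniteDimensional F V]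

lemma exists_equiv_two {α β : Type} [Fintype α] [Fintype β] [DecidableEq α] [DecidableEq β]
    (h : Fintype.card α = Fintype.card β) {a1 a2 : α} {b1 b2 : β} (ha : a1 ≠ a2)
    (hb : b1 ≠ b2) : ∃ σ : α ≃ β, σ a1 = b1 ∧ σ a2 = b2 := by
  let τ := Fintype.equivOfCardEq h
  let τ1 := τ.trans (Equiv.swap (τ a1) b1)
  have h1 : τ1 a1 = b1 := by simp [τ1]
  refine ⟨τ1.trans (Equiv.swap (τ1 a2) b2), ?_, by simp⟩
  simp only [Equiv.trans_apply, h1]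
  apply Equiv.swap_apply_of_ne_of_ne
  · intro hc
    exact ha (τ1.injective (h1.trans hc))
  · exact hb

lemma gen_of_finrank_one {X : Submodule F V} (hX : finrank F X = 1) :
    ∃ x : V, x ≠ 0 ∧ X = span F {x} := by
  have hne : X ≠ ⊥ := by
    intro hc
    rw [hc, finrank_bot] at hX
    omega
  obtain ⟨x, hx, hx0⟩ := X.ne_bot_iff.mp hne
  refine ⟨x, hx0, ?_⟩
  symm
  apply Submodule.eq_of_le_of_finrank_eq
  · rwa [span_singleton_le_iff_mem]
  · rw [hX]; exact finrank_span_singleton hx0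

lemma indep_of_ne_spans {x y : V} (hx : x ≠ 0) (hy : y ≠ 0)
    (hne : (span F {x} : Submodule F V) ≠ span F {y}) :
    LinearIndependent F ![x, y] := by
  rw [LinearIndependent.pair_iff]
  intro s t hst
  by_cases ht : t = 0
  · subst ht
    simp only [smul_zero, zero_smul, add_zero] at hst
    rcases smul_eq_zero.mp hst with h | h
    · exact ⟨h, rfl⟩
    · exact absurd h hx
  · exfalso
    have h2 : t • y = -(s • x) := by rwa [add_comm, ← eq_neg_iff_add_eq_zero] at hst
    have hyx : y ∈ (span F {x} : Submodule F V) := by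
      rw [mem_span_singleton]
      refine ⟨-(t⁻¹ * s), ?_⟩
      calc (-(t⁻¹ * s)) • x = t⁻¹ • (t • y) := by rw [h2, smul_neg, smul_smul, neg_smul]
        _ = y := inv_smul_smul₀ ht y
    apply hne
    symm
    apply Submodule.eq_of_le_of_finrank_eq
    · rwa [span_singleton_le_iff_mem]
    · rw [finrank_span_singleton hx, finrank_span_singleton hy]

/-- Transitivity of `GL(V)` on pairs of distinct points. -/
lemma exists_equiv_pair {X Y X' Y' : Submodule F V}
    (hX : finrank F X = 1) (hY : finrank F Y = 1) (hX' : finrank F X' = 1)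
    (hY' : finrank F Y' = 1) (hXY : X ≠ Y) (hXY' : X' ≠ Y') :
    ∃ e : V ≃ₗ[F] V, map (e : V →ₗ[F] V) X = X' ∧ map (e : V →ₗ[F] V) Y = Y' := by
  obtain ⟨x, hx0, hxX⟩ := gen_of_finrank_one hX
  obtain ⟨y, hy0, hyY⟩ := gen_of_finrank_one hY
  obtain ⟨x', hx0', hxX'⟩ := gen_of_finrank_one hX'
  obtain ⟨y', hy0', hyY'⟩ := gen_of_finrank_one hY'
  have li : LinearIndependent F ![x, y] :=
    indep_of_ne_spans hx0 hy0 (by rw [← hxX, ← hyY]; exact hXY)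
  have li' : LinearIndependent F ![x', y'] :=
    indep_of_ne_spans hx0' hy0' (by rw [← hxX', ← hyY']; exact hXY')
  have hs := li.linearIndepOn_id
  have hs' := li'.linearIndepOn_id
  let b := Basis.extend hs
  let b' := Basis.extend hs'
  have := FiniteDimensional.fintypeBasisIndex b
  have := FiniteDimensional.fintypeBasisIndex b'
  have hcard : Fintype.card (hs.extend (Set.subset_univ _))
      = Fintype.card (hs'.extend (Set.subset_univ _)) := by
    rw [← Module.finrank_eq_card_basis b, ← Module.finrank_eq_card_basis b']
  have hxs : x ∈ hs.extend (Set.subset_univ _) :=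
    hs.subset_extend _ ⟨0, rfl⟩
  have hys : y ∈ hs.extend (Set.subset_univ _) :=
    hs.subset_extend _ ⟨1, rfl⟩
  have hxs' : x' ∈ hs'.extend (Set.subset_univ _) :=
    hs'.subset_extend _ ⟨0, rfl⟩
  have hys' : y' ∈ hs'.extend (Set.subset_univ _) :=
    hs'.subset_extend _ ⟨1, rfl⟩
  have hxyne : x ≠ y := by
    intro hc
    apply hXY
    rw [hxX, hyY, hc]
  have hxyne' : x' ≠ y' := by
    intro hc
    apply hXY'
    rw [hxX', hyY', hc]
  obtain ⟨σ, hσ1, hσ2⟩ := exists_equiv_two hcard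
    (a1 := (⟨x, hxs⟩ : hs.extend (Set.subset_univ _)))
    (a2 := ⟨y, hys⟩) (b1 := (⟨x', hxs'⟩ : hs'.extend (Set.subset_univ _)))
    (b2 := ⟨y', hys'⟩)
    (fun hc => hxyne (congrArg Subtype.val hc))
    (fun hc => hxyne' (congrArg Subtype.val hc))
  refine ⟨b.equiv b' σ, ?_, ?_⟩
  · rw [hxX, hxX']
    rw [Submodule.map_span]
    congr 1
    rw [Set.image_singleton]
    congr 1
    have hbx : b ⟨x, hxs⟩ = x := Basis.extend_apply_self hs _
    have hkey : (b.equiv b' σ) (b ⟨x, hxs⟩) = x' := by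
      rw [Basis.equiv_apply, hσ1]
      exact Basis.extend_apply_self hs' _
    exact (congrArg (b.equiv b' σ) hbx).symm.trans hkey
  · rw [hyY, hyY']
    rw [Submodule.map_span]
    congr 1
    rw [Set.image_singleton]
    congr 1
    have hby : b ⟨y, hys⟩ = y := Basis.extend_apply_self hs _
    have hkey : (b.equiv b' σ) (b ⟨y, hys⟩) = y' := by
      rw [Basis.equiv_apply, hσ2]
      exact Basis.extend_apply_self hs' _
    exact (congrArg (b.equiv b' σ) hby).symm.trans hkey

end SecD


open Matrix
def MaxFlagA (F : Type) [Field F] (n : ℕ) : Type :=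
  {U : Fin (n + 2) → Submodule F (Fin (n + 1) → F) //
    Monotone U ∧ ∀ k : Fin (n + 2), Module.finrank F (U k) = (k : ℕ)}

instance (F : Type) [Field F] [Fintype F] (n : ℕ) : Finite (MaxFlagA F n) :=
  Subtype.finite

noncomputable instance (F : Type) [Field F] [Fintype F] (n : ℕ) : Fintype (MaxFlagA F n) :=
  Fintype.ofFinite _

/-- The points of `F^(n+1)`: one-dimensional subspaces. -/
def PointA (F : Type) [Field F] (n : ℕ) : Type :=
  {X : Submodule F (Fin (n + 1) → F) // Module.finrank F X = 1}

instance (F : Type) [Field F] [Fintype F] (n : ℕ) : Finite (PointA F n) :=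
  Subtype.finite

noncomputable instance (F : Type) [Field F] [Fintype F] (n : ℕ) : Fintype (PointA F n) :=
  Fintype.ofFinite _

noncomputable def flagMemA {F : Type} [Field F] {n : ℕ} (c : MaxFlagA F n) (k : ℕ) :
    Submodule F (Fin (n + 1) → F) :=
  if h : k < n + 2 then c.1 ⟨k, h⟩ else ⊤

noncomputable def flagTypeA {F : Type} [Field F] {n : ℕ} (c : MaxFlagA F n)
    (X : Submodule F (Fin (n + 1) → F)) : ℕ :=
  sInf {k : ℕ | X ≤ flagMemA c k}

open Classical in
/-- `T_i`: the flag-by-point `{0,1}` matrix of the `type i` relation. -/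
noncomputable def TmatA (F : Type) [Field F] [Fintype F] (n : ℕ) (i : ℕ) :
    Matrix (MaxFlagA F n) (PointA F n) ℚ :=
  fun c X => if flagTypeA c X.1 = i then 1 else 0

/-- `F_j = q^j ∑_{i=m-j+1}^{m} T_i - ∑_{i=m+1}^{m+j} T_i`. -/
noncomputable def FmatA (F : Type) [Field F] [Fintype F] (n m j : ℕ) :
    Matrix (MaxFlagA F n) (PointA F n) ℚ :=
  (Fintype.card F : ℚ) ^ j • (∑ i ∈ Finset.Icc (m - j + 1) m, TmatA F n i) -
    ∑ i ∈ Finset.Icc (m + 1) (m + j), TmatA F n i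

/-- `v(k) = (q^(k+1)-1)/(q-1)`. -/
noncomputable def vA (q : ℚ) (k : ℕ) : ℚ := (q ^ (k + 1) - 1) / (q - 1)

/-- `c(k) = ∏_{i=1}^{k} v(i)`. -/
noncomputable def cA (q : ℚ) (k : ℕ) : ℚ :=
  ∏ i ∈ Finset.Icc 1 k, (q ^ (i + 1) - 1) / (q - 1)

section SecE



variable {F : Type} [Field F] [Fintype F] {n : ℕ}

section TypeLemmas

variable (c : MaxFlagA F n)

lemma finrank_flagMemA (k : ℕ) (hk : k ≤ n + 1) : finrank F (flagMemA c k) = k := by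
  rw [flagMemA, dif_pos (by omega : k < n + 2)]
  exact c.2.2 ⟨k, by omega⟩

lemma flagMemA_mono : Monotone (flagMemA c) := by
  intro a b hab
  simp only [flagMemA]
  by_cases hb : b < n + 2
  · rw [dif_pos hb, dif_pos (by omega : a < n + 2)]
    exact c.2.1 (by simpa [Fin.le_def] using hab)
  · rw [dif_neg hb]
    exact le_top

lemma flagMemA_zero : flagMemA c 0 = ⊥ :=
  Submodule.finrank_eq_zero.mp (finrank_flagMemA c 0 (by omega))

lemma flagMemA_last : flagMemA c (n + 1) = ⊤ := by
  apply Submodule.eq_top_of_finrank_eq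
  rw [finrank_flagMemA c (n + 1) le_rfl, Module.finrank_fin_fun]

lemma typeA_mem (X : Submodule F (Fin (n + 1) → F)) :
    X ≤ flagMemA c (flagTypeA c X) :=
  Nat.sInf_mem (⟨n + 1, by rw [Set.mem_setOf_eq, flagMemA_last]; exact le_top⟩ :
    {k : ℕ | X ≤ flagMemA c k}.Nonempty)

lemma typeA_le (X : Submodule F (Fin (n + 1) → F)) : flagTypeA c X ≤ n + 1 :=
  Nat.sInf_le (by rw [Set.mem_setOf_eq, flagMemA_last]; exact le_top)

lemma typeA_pos {X : Submodule F (Fin (n + 1) → F)} (hX : finrank F X = 1) :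
    1 ≤ flagTypeA c X := by
  by_contra hc
  have h0 : flagTypeA c X = 0 := by omega
  have := typeA_mem c X
  rw [h0, flagMemA_zero] at this
  rw [le_bot_iff.mp this, finrank_bot] at hX
  omega

lemma typeA_eq_iff {X : Submodule F (Fin (n + 1) → F)} (hX : finrank F X = 1)
    (i : ℕ) (hi : 1 ≤ i) :
    flagTypeA c X = i ↔ X ≤ flagMemA c i ∧ ¬ X ≤ flagMemA c (i - 1) := by
  constructor
  · intro h
    subst h
    refine ⟨typeA_mem c X, fun hc => ?_⟩
    have h1 : flagTypeA c X ≤ flagTypeA c X - 1 := Nat.sInf_le hc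
    have h2 := typeA_pos c hX
    omega
  · rintro ⟨h1, h2⟩
    have hle : flagTypeA c X ≤ i := Nat.sInf_le h1
    have hge : i ≤ flagTypeA c X := by
      by_contra hc
      exact h2 ((typeA_mem c X).trans (flagMemA_mono c (by omega)))
    omega

end TypeLemmas


/-- κ: the number of points of a given type w.r.t. a fixed flag. -/
lemma card_type_fiber (c : MaxFlagA F n) (i : ℕ) (hi1 : 1 ≤ i) (hi2 : i ≤ n + 1) :
    Fintype.card {Y : PointA F n // flagTypeA c Y.1 = i} = Fintype.card F ^ (i - 1) := by
  obtain ⟨a, rfl⟩ : ∃ a, i = a + 1 := ⟨i - 1, by omega⟩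
  simp only [Nat.add_sub_cancel]
  have e1 : {Y : PointA F n // flagTypeA c Y.1 = a + 1}
      ≃ {X : Submodule F (Fin (n + 1) → F) // finrank F X = 1 ∧ flagTypeA c X = a + 1} :=
    Equiv.subtypeSubtypeEquivSubtypeInter
      (fun X : Submodule F (Fin (n + 1) → F) => finrank F X = 1)
      (fun X => flagTypeA c X = a + 1)
  have e2 : {X : Submodule F (Fin (n + 1) → F) // finrank F X = 1 ∧ flagTypeA c X = a + 1}
      ≃ {X : Submodule F (Fin (n + 1) → F) //
          finrank F X = 1 ∧ (X ≤ flagMemA c (a + 1) ∧ ¬ X ≤ flagMemA c (a))} :=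
    Equiv.subtypeEquivRight (fun X => by
      constructor
      · rintro ⟨hr, ht⟩; exact ⟨hr, (typeA_eq_iff c hr (a + 1) hi1).mp (by simpa using ht)⟩
      · rintro ⟨hr, ht⟩; exact ⟨hr, by simpa using (typeA_eq_iff c hr (a + 1) hi1).mpr (by simpa using ht)⟩)
  rw [Fintype.card_congr (e1.trans e2)]
  rw [Fintype.card_subtype]
  have hsub : Finset.filter (fun X : Submodule F (Fin (n + 1) → F) =>
        finrank F X = 1 ∧ X ≤ flagMemA c (a)) Finset.univ
      ⊆ Finset.filter (fun X : Submodule F (Fin (n + 1) → F) =>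
        finrank F X = 1 ∧ X ≤ flagMemA c (a + 1)) Finset.univ := by
    intro Z hZ
    rw [Finset.mem_filter] at hZ ⊢
    exact ⟨hZ.1, hZ.2.1, hZ.2.2.trans (flagMemA_mono c (by omega))⟩
  have hdiff : Finset.filter (fun X : Submodule F (Fin (n + 1) → F) =>
        finrank F X = 1 ∧ (X ≤ flagMemA c (a + 1) ∧ ¬ X ≤ flagMemA c (a))) Finset.univ
      = Finset.filter (fun X : Submodule F (Fin (n + 1) → F) =>
          finrank F X = 1 ∧ X ≤ flagMemA c (a + 1)) Finset.univ
        \ Finset.filter (fun X : Submodule F (Fin (n + 1) → F) =>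
          finrank F X = 1 ∧ X ≤ flagMemA c (a)) Finset.univ := by
    ext Z
    simp only [Finset.mem_filter, Finset.mem_sdiff, Finset.mem_univ, true_and]
    tauto
  rw [hdiff, Finset.card_sdiff_of_subset hsub]
  have h1 : (Finset.filter (fun X : Submodule F (Fin (n + 1) → F) =>
      finrank F X = 1 ∧ X ≤ flagMemA c (a + 1)) Finset.univ).card
      = ∑ t ∈ Finset.range (a + 1), Fintype.card F ^ t := by
    rw [← Fintype.card_subtype, card_points_le, finrank_flagMemA c (a + 1) hi2]
  have h2 : (Finset.filter (fun X : Submodule F (Fin (n + 1) → F) =>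
      finrank F X = 1 ∧ X ≤ flagMemA c (a)) Finset.univ).card
      = ∑ t ∈ Finset.range (a), Fintype.card F ^ t := by
    rw [← Fintype.card_subtype, card_points_le, finrank_flagMemA c (a) (by omega)]
  rw [h1, h2, Finset.sum_range_succ]
  omega

section Equivariance

variable {V : Type} -- dummy

noncomputable def mapFlagA (e : (Fin (n + 1) → F) ≃ₗ[F] (Fin (n + 1) → F))
    (c : MaxFlagA F n) : MaxFlagA F n :=
  ⟨fun k => Submodule.map (e : (Fin (n + 1) → F) →ₗ[F] (Fin (n + 1) → F)) (c.1 k),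
    fun a b hab => Submodule.map_mono (c.2.1 hab),
    fun k => by rw [LinearEquiv.finrank_map_eq]; exact c.2.2 k⟩

lemma flagMemA_mapFlagA (e : (Fin (n + 1) → F) ≃ₗ[F] (Fin (n + 1) → F))
    (c : MaxFlagA F n) (k : ℕ) :
    flagMemA (mapFlagA e c) k
      = Submodule.map (e : (Fin (n + 1) → F) →ₗ[F] (Fin (n + 1) → F)) (flagMemA c k) := by
  simp only [flagMemA]
  by_cases hk : k < n + 2
  · rw [dif_pos hk, dif_pos hk]; rfl
  · rw [dif_neg hk, dif_neg hk]
    rw [Submodule.map_top, LinearEquiv.range]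

lemma flagTypeA_mapFlagA (e : (Fin (n + 1) → F) ≃ₗ[F] (Fin (n + 1) → F))
    (c : MaxFlagA F n) (X : Submodule F (Fin (n + 1) → F)) :
    flagTypeA (mapFlagA e c)
      (Submodule.map (e : (Fin (n + 1) → F) →ₗ[F] (Fin (n + 1) → F)) X) = flagTypeA c X := by
  unfold flagTypeA
  congr 1
  ext k
  rw [Set.mem_setOf_eq, Set.mem_setOf_eq, flagMemA_mapFlagA]
  exact Submodule.map_le_map_iff_of_injective e.injective _ _

noncomputable def flagEquivA (e : (Fin (n + 1) → F) ≃ₗ[F] (Fin (n + 1) → F)) :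
    MaxFlagA F n ≃ MaxFlagA F n where
  toFun := mapFlagA e
  invFun := mapFlagA e.symm
  left_inv c := by
    apply Subtype.ext
    funext k
    show Submodule.map _ (Submodule.map _ (c.1 k)) = c.1 k
    rw [← Submodule.map_comp]
    simp
  right_inv c := by
    apply Subtype.ext
    funext k
    show Submodule.map _ (Submodule.map _ (c.1 k)) = c.1 k
    rw [← Submodule.map_comp]
    simp

end Equivariance

section Counts

variable (F n)

noncomputable def NNA (h i : ℕ) (X Y : PointA F n) : ℕ :=
  Fintype.card {c : MaxFlagA F n // flagTypeA c X.1 = h ∧ flagTypeA c Y.1 = i}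

noncomputable def CCA (h : ℕ) (X : PointA F n) : ℕ :=
  Fintype.card {c : MaxFlagA F n // flagTypeA c X.1 = h}

variable {F n}

lemma NNA_invariant (h i : ℕ) (X Y X' Y' : PointA F n)
    (e : (Fin (n + 1) → F) ≃ₗ[F] (Fin (n + 1) → F))
    (hX : Submodule.map (e : (Fin (n + 1) → F) →ₗ[F] (Fin (n + 1) → F)) X.1 = X'.1)
    (hY : Submodule.map (e : (Fin (n + 1) → F) →ₗ[F] (Fin (n + 1) → F)) Y.1 = Y'.1) :
    NNA F n h i X Y = NNA F n h i X' Y' := by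
  apply Fintype.card_congr
  apply Equiv.subtypeEquiv (flagEquivA e)
  intro c
  show _ ↔ flagTypeA (mapFlagA e c) X'.1 = h ∧ flagTypeA (mapFlagA e c) Y'.1 = i
  rw [← hX, ← hY, flagTypeA_mapFlagA, flagTypeA_mapFlagA]

lemma CCA_invariant (h : ℕ) (X X' : PointA F n)
    (e : (Fin (n + 1) → F) ≃ₗ[F] (Fin (n + 1) → F))
    (hX : Submodule.map (e : (Fin (n + 1) → F) →ₗ[F] (Fin (n + 1) → F)) X.1 = X'.1) :
    CCA F n h X = CCA F n h X' := by
  apply Fintype.card_congr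
  apply Equiv.subtypeEquiv (flagEquivA e)
  intro c
  show _ ↔ flagTypeA (mapFlagA e c) X'.1 = h
  rw [← hX, flagTypeA_mapFlagA]

/-- row sums: `∑_Y N(h,i;X,Y) = |C_h^X| q^(i-1)`. -/
lemma sum_NNA (h i : ℕ) (hi1 : 1 ≤ i) (hi2 : i ≤ n + 1) (X : PointA F n) :
    ∑ Y : PointA F n, NNA F n h i X Y = CCA F n h X * Fintype.card F ^ (i - 1) := by
  unfold NNA
  rw [← Fintype.card_sigma]
  have e : (Σ Y : PointA F n,
        {c : MaxFlagA F n // flagTypeA c X.1 = h ∧ flagTypeA c Y.1 = i})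
      ≃ (Σ c : {c : MaxFlagA F n // flagTypeA c X.1 = h},
        {Y : PointA F n // flagTypeA c.1 Y.1 = i}) :=
    { toFun := fun p => ⟨⟨p.2.1, p.2.2.1⟩, ⟨p.1, p.2.2.2⟩⟩
      invFun := fun p => ⟨p.2.1, ⟨p.1.1, p.1.2, p.2.2⟩⟩
      left_inv := fun p => rfl
      right_inv := fun p => rfl }
  rw [Fintype.card_congr e, Fintype.card_sigma]
  have : ∀ c : {c : MaxFlagA F n // flagTypeA c X.1 = h},
      Fintype.card {Y : PointA F n // flagTypeA c.1 Y.1 = i} = Fintype.card F ^ (i - 1) :=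
    fun c => card_type_fiber c.1 i hi1 hi2
  simp only [this, Finset.sum_const, smul_eq_mul, Finset.card_univ]
  rfl

lemma sum_CCA (h : ℕ) (hh1 : 1 ≤ h) (hh2 : h ≤ n + 1) :
    ∑ X : PointA F n, CCA F n h X
      = Fintype.card (MaxFlagA F n) * Fintype.card F ^ (h - 1) := by
  unfold CCA
  rw [← Fintype.card_sigma]
  have e : (Σ X : PointA F n, {c : MaxFlagA F n // flagTypeA c X.1 = h})
      ≃ (Σ c : MaxFlagA F n, {X : PointA F n // flagTypeA c X.1 = h}) :=
    { toFun := fun p => ⟨p.2.1, ⟨p.1, p.2.2⟩⟩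
      invFun := fun p => ⟨p.2.1, ⟨p.1, p.2.2⟩⟩
      left_inv := fun p => rfl
      right_inv := fun p => rfl }
  rw [Fintype.card_congr e, Fintype.card_sigma]
  have : ∀ c : MaxFlagA F n,
      Fintype.card {X : PointA F n // flagTypeA c X.1 = h} = Fintype.card F ^ (h - 1) :=
    fun c => card_type_fiber c h hh1 hh2
  simp only [this, Finset.sum_const, smul_eq_mul, Finset.card_univ]

lemma NNA_diag (h i : ℕ) (X : PointA F n) :
    NNA F n h i X X = if h = i then CCA F n h X else 0 := by
  split_ifs with hhi
  · subst hhi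
    apply Fintype.card_congr
    exact Equiv.subtypeEquivRight (fun c => and_self_iff)
  · rw [NNA, Fintype.card_eq_zero_iff]
    constructor
    rintro ⟨c, hc1, hc2⟩
    exact hhi (hc1.symm.trans hc2)

end Counts


section Consts

lemma NNA_offdiag_const (h i : ℕ) (X Y X' Y' : PointA F n) (hXY : X ≠ Y) (hXY' : X' ≠ Y') :
    NNA F n h i X Y = NNA F n h i X' Y' := by
  have h1 : X.1 ≠ Y.1 := fun hc => hXY (Subtype.ext hc)
  have h2 : X'.1 ≠ Y'.1 := fun hc => hXY' (Subtype.ext hc)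
  obtain ⟨e, he1, he2⟩ := exists_equiv_pair X.2 Y.2 X'.2 Y'.2 h1 h2
  exact NNA_invariant h i X Y X' Y' e he1 he2

lemma CCA_const (h : ℕ) (hcard : 3 ≤ Fintype.card (PointA F n)) (X X' : PointA F n) :
    CCA F n h X = CCA F n h X' := by
  by_cases hXX : X = X'
  · rw [hXX]
  · have hne : ((Finset.univ : Finset (PointA F n)) \ {X, X'}).Nonempty := by
      rw [← Finset.card_pos]
      have hle := Finset.le_card_sdiff ({X, X'} : Finset (PointA F n)) Finset.univ
      have hc2 : ({X, X'} : Finset (PointA F n)).card ≤ 2 := by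
        apply (Finset.card_insert_le _ _).trans
        simp
      rw [Finset.card_univ] at hle
      omega
    obtain ⟨Z, hZ⟩ := hne
    simp only [Finset.mem_sdiff, Finset.mem_univ, true_and, Finset.mem_insert,
      Finset.mem_singleton, not_or] at hZ
    have hXZ : X.1 ≠ Z.1 := fun hc => hZ.1 (Subtype.ext hc.symm)
    have hXZ' : X'.1 ≠ Z.1 := fun hc => hZ.2 (Subtype.ext hc.symm)
    obtain ⟨e, he1, he2⟩ := exists_equiv_pair X.2 Z.2 X'.2 Z.2 hXZ hXZ'
    exact CCA_invariant h X X' e he1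

lemma NNA_rel (h i : ℕ) (hi1 : 1 ≤ i) (hi2 : i ≤ n + 1) (X Y : PointA F n) (hXY : X ≠ Y) :
    NNA F n h i X X + (Fintype.card (PointA F n) - 1) * NNA F n h i X Y
      = CCA F n h X * Fintype.card F ^ (i - 1) := by
  have hsum := sum_NNA h i hi1 hi2 X
  rw [← Finset.add_sum_erase Finset.univ _ (Finset.mem_univ X)] at hsum
  have hconst : ∀ Y' ∈ Finset.univ.erase X, NNA F n h i X Y' = NNA F n h i X Y := by
    intro Y' hY'
    have : Y' ≠ X := Finset.ne_of_mem_erase hY'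
    exact NNA_offdiag_const h i X Y' X Y (fun hc => this (hc.symm)) (fun hc => hXY hc)
  rw [Finset.sum_congr rfl hconst, Finset.sum_const, Finset.card_erase_of_mem
    (Finset.mem_univ X), Finset.card_univ, smul_eq_mul] at hsum
  exact hsum

lemma CCA_rel (h : ℕ) (hh1 : 1 ≤ h) (hh2 : h ≤ n + 1)
    (hcard : 3 ≤ Fintype.card (PointA F n)) (X : PointA F n) :
    Fintype.card (PointA F n) * CCA F n h X
      = Fintype.card (MaxFlagA F n) * Fintype.card F ^ (h - 1) := by
  have hsum := sum_CCA (F := F) (n := n) h hh1 hh2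
  rw [Finset.sum_congr rfl (fun X' _ => CCA_const h hcard X' X), Finset.sum_const,
    Finset.card_univ, smul_eq_mul] at hsum
  exact hsum

end Consts

end SecE

section Glue
variable {F : Type} [Field F] [Fintype F] {n : ℕ}

lemma card_PointA :
    Fintype.card (PointA F n) = ∑ t ∈ Finset.range (n + 1), Fintype.card F ^ t := by
  have h0 : Fintype.card (PointA F n)
      = Fintype.card {X : Submodule F (Fin (n + 1) → F) // Module.finrank F X = 1} :=
    Fintype.card_congr (Equiv.refl _)
  rw [h0, card_points (n + 1) (Module.finrank_fin_fun F)]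

lemma card_MaxFlagA :
    Fintype.card (MaxFlagA F n)
      = ∏ k ∈ Finset.range (n + 1), (∑ i ∈ Finset.range (k + 1), Fintype.card F ^ i) := by
  have h0 : Fintype.card (MaxFlagA F n)
      = Fintype.card (FlagG F (Fin (n + 1) → F) (n + 1)) :=
    Fintype.card_congr (Equiv.refl _)
  rw [h0, card_flagG (n + 1) (Fin (n + 1) → F) (Module.finrank_fin_fun F)]
  rfl

end Glue





section Entry

variable {F : Type} [Field F] [Fintype F] {n : ℕ}

lemma sum_TT (h i : ℕ) (X Y : PointA F n) :
    ∑ c : MaxFlagA F n, TmatA F n h c X * TmatA F n i c Y = (NNA F n h i X Y : ℚ) := by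
  have hterm : ∀ c : MaxFlagA F n, TmatA F n h c X * TmatA F n i c Y
      = if (flagTypeA c X.1 = h ∧ flagTypeA c Y.1 = i) then (1 : ℚ) else 0 := by
    intro c
    simp only [TmatA]
    by_cases h1 : flagTypeA c X.1 = h <;> by_cases h2 : flagTypeA c Y.1 = i <;>
      simp [h1, h2]
  rw [Finset.sum_congr rfl (fun c _ => hterm c), Finset.sum_boole]
  congr 1
  rw [NNA, Fintype.card_of_subtype (Finset.filter
    (fun c : MaxFlagA F n => flagTypeA c X.1 = h ∧ flagTypeA c Y.1 = i) Finset.univ)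
    (fun c => by simp)]

lemma entry_eq (m j h : ℕ) (X Y : PointA F n) :
    ((TmatA F n h)ᵀ * FmatA F n m j) X Y
      = (Fintype.card F : ℚ) ^ j * (∑ i ∈ Finset.Icc (m - j + 1) m, (NNA F n h i X Y : ℚ))
        - ∑ i ∈ Finset.Icc (m + 1) (m + j), (NNA F n h i X Y : ℚ) := by
  rw [Matrix.mul_apply]
  have hterm : ∀ c : MaxFlagA F n,
      (TmatA F n h)ᵀ X c * FmatA F n m j c Y
        = (Fintype.card F : ℚ) ^ j *
            (∑ i ∈ Finset.Icc (m - j + 1) m, TmatA F n h c X * TmatA F n i c Y)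
          - ∑ i ∈ Finset.Icc (m + 1) (m + j), TmatA F n h c X * TmatA F n i c Y := by
    intro c
    have e1 : ∑ i ∈ Finset.Icc (m - j + 1) m, TmatA F n h c X * TmatA F n i c Y
        = TmatA F n h c X * ∑ i ∈ Finset.Icc (m - j + 1) m, TmatA F n i c Y :=
      (Finset.mul_sum _ _ _).symm
    have e2 : ∑ i ∈ Finset.Icc (m + 1) (m + j), TmatA F n h c X * TmatA F n i c Y
        = TmatA F n h c X * ∑ i ∈ Finset.Icc (m + 1) (m + j), TmatA F n i c Y :=
      (Finset.mul_sum _ _ _).symm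
    rw [e1, e2]
    simp only [Matrix.transpose_apply, FmatA, Matrix.sub_apply, Matrix.smul_apply,
      Matrix.sum_apply, smul_eq_mul]
    ring
  rw [Finset.sum_congr rfl (fun c _ => hterm c), Finset.sum_sub_distrib]
  congr 1
  · rw [← Finset.mul_sum, Finset.sum_comm]
    congr 1
    exact Finset.sum_congr rfl (fun i _ => sum_TT h i X Y)
  · rw [Finset.sum_comm]
    exact Finset.sum_congr rfl (fun i _ => sum_TT h i X Y)

end Entry

lemma shift_sum (Q : ℚ) (m j : ℕ) (hj1 : 1 ≤ j) (hj2 : j ≤ m) :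
    Q ^ j * ∑ i ∈ Finset.Icc (m - j + 1) m, Q ^ (i - 1)
      = ∑ i ∈ Finset.Icc (m + 1) (m + j), Q ^ (i - 1) := by
  rw [Finset.mul_sum]
  refine Finset.sum_bij' (fun i _ => i + j) (fun i _ => i - j) ?_ ?_ ?_ ?_ ?_
  · intro a ha
    simp only [Finset.mem_Icc] at ha ⊢
    omega
  · intro a ha
    simp only [Finset.mem_Icc] at ha ⊢
    omega
  · intro a ha
    simp only [Finset.mem_Icc] at ha
    show a + j - j = a
    omega
  · intro a ha
    simp only [Finset.mem_Icc] at ha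
    show a - j + j = a
    omega
  · intro a ha
    simp only [Finset.mem_Icc] at ha
    show Q ^ j * Q ^ (a - 1) = Q ^ (a + j - 1)
    rw [← pow_add]
    congr 1
    omega

lemma prod_vA_split (Q : ℚ) (hQ : Q ≠ 1) (n : ℕ) (hn : 3 ≤ n) :
    ∏ k ∈ Finset.range (n + 1), vA Q k = cA Q (n - 2) * vA Q (n - 1) * vA Q n := by
  obtain ⟨N, rfl⟩ : ∃ N, n = N + 3 := ⟨n - 3, by omega⟩
  have h2 : N + 3 - 2 = N + 1 := by omega
  have h1 : N + 3 - 1 = N + 2 := by omega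
  rw [h2, h1]
  rw [show N + 3 + 1 = (N + 2) + 1 + 1 from rfl, Finset.prod_range_succ,
    Finset.prod_range_succ]
  have hins : Finset.range (N + 2) = insert 0 (Finset.Icc 1 (N + 1)) := by
    ext t
    simp only [Finset.mem_range, Finset.mem_insert, Finset.mem_Icc]
    omega
  rw [hins, Finset.prod_insert (by simp)]
  have hv0 : vA Q 0 = 1 := by
    rw [vA, pow_one]
    exact div_self (sub_ne_zero.mpr hQ)
  have hcA : cA Q (N + 1) = ∏ i ∈ Finset.Icc 1 (N + 1), vA Q i :=
    Finset.prod_congr rfl (fun i _ => rfl)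
  rw [hv0, hcA, one_mul]

open Classical in
/-- (i) `T_hᵀ F_j = 0` for `h < m-j+1`; (ii) `T_(m-j+1)ᵀ F_j = c(n-2)·q^(m-1)·(v(n)·I - J)`. -/
theorem Tmat_transpose_mul_Fmat (F : Type) [Field F] [Fintype F] (q : ℕ)
    (hq : Fintype.card F = q) (m : ℕ) (hm : 2 ≤ m) (n : ℕ) (hn : n = 2 * m - 1)
    (j : ℕ) (hj1 : 1 ≤ j) (hj2 : j ≤ m) :
    (∀ h : ℕ, 1 ≤ h → h ≤ n + 1 → h < m - j + 1 →
      (TmatA F n h)ᵀ * FmatA F n m j = 0) ∧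
    (TmatA F n (m - j + 1))ᵀ * FmatA F n m j =
      (cA (q : ℚ) (n - 2) * (q : ℚ) ^ (m - 1)) •
        (vA (q : ℚ) n • (1 : Matrix (PointA F n) (PointA F n) ℚ) -
          Matrix.of (fun _ _ => (1 : ℚ))) := by
  have hq2 : 2 ≤ q := by rw [← hq]; exact Fintype.one_lt_card
  have hQcard : (Fintype.card F : ℚ) = (q : ℚ) := by rw [hq]
  have hQ1 : (1 : ℚ) < (q : ℚ) := by exact_mod_cast (by omega : 1 < q)
  have hQne1 : (q : ℚ) ≠ 1 := ne_of_gt hQ1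
  have hn3 : 3 ≤ n := by omega
  have hvA : ∀ k : ℕ, (∑ t ∈ Finset.range (k + 1), (q : ℚ) ^ t) = vA (q : ℚ) k := by
    intro k; rw [vA, geom_sum_eq hQne1]
  have hvApos : ∀ k : ℕ, 0 < vA (q : ℚ) k := by
    intro k
    rw [← hvA]
    apply Finset.sum_pos
    · intro t _; positivity
    · exact ⟨0, by simp⟩
  have hvAne : ∀ k, vA (q : ℚ) k ≠ 0 := fun k => ne_of_gt (hvApos k)
  have hPq : (Fintype.card (PointA F n) : ℚ) = vA (q : ℚ) n := by
    rw [card_PointA, hq]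
    push_cast
    exact hvA n
  have hP3 : 3 ≤ Fintype.card (PointA F n) := by
    rw [card_PointA, hq]
    have hsub : Finset.range 2 ⊆ Finset.range (n + 1) := by
      apply Finset.range_subset_range.mpr; omega
    have h0 : 1 + q ≤ ∑ t ∈ Finset.range (n + 1), q ^ t := by
      have := Finset.sum_le_sum_of_subset (f := fun t => q ^ t) hsub
      simpa [Finset.sum_range_succ] using this
    omega
  have hvAn1 : vA (q : ℚ) n - 1 = (q : ℚ) * vA (q : ℚ) (n - 1) := by
    have hexp : n - 1 + 1 = n := by omega
    rw [vA, vA, hexp]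
    have hQm1 : (q : ℚ) - 1 ≠ 0 := sub_ne_zero.mpr hQne1
    field_simp
    ring
  have hPm1 : (Fintype.card (PointA F n) : ℚ) - 1 ≠ 0 := by
    rw [hPq, hvAn1]
    exact mul_ne_zero (by positivity) (hvAne _)
  have hΦq : (Fintype.card (MaxFlagA F n) : ℚ)
      = cA (q : ℚ) (n - 2) * vA (q : ℚ) (n - 1) * vA (q : ℚ) n := by
    rw [card_MaxFlagA, hq]
    push_cast
    rw [Finset.prod_congr rfl (fun k _ => hvA k)]
    exact prod_vA_split (q : ℚ) hQne1 n hn3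
  have hCCval : ∀ h : ℕ, 1 ≤ h → h ≤ n + 1 → ∀ X : PointA F n,
      (CCA F n h X : ℚ) = cA (q : ℚ) (n - 2) * vA (q : ℚ) (n - 1) * (q : ℚ) ^ (h - 1) := by
    intro h hh1 hh2 X
    have h1 := CCA_rel h hh1 hh2 hP3 X
    have h2 := congrArg (Nat.cast : ℕ → ℚ) h1
    push_cast at h2
    rw [hPq, hΦq, hQcard] at h2
    apply mul_left_cancel₀ (hvAne n)
    rw [h2]; ring
  -- the key linear relation, in ℚ
  have hNNq : ∀ h : ℕ, ∀ X Y : PointA F n, X ≠ Y → ∀ i, 1 ≤ i → i ≤ n + 1 →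
      ((Fintype.card (PointA F n) : ℚ) - 1) * (NNA F n h i X Y : ℚ)
        = (CCA F n h X : ℚ) * (q : ℚ) ^ (i - 1)
          - (if h = i then (CCA F n h X : ℚ) else 0) := by
    intro h X Y hXY i hi1 hi2
    have h1 := NNA_rel h i hi1 hi2 X Y hXY
    rw [NNA_diag] at h1
    have hcast : 1 ≤ Fintype.card (PointA F n) := by omega
    by_cases hhi : h = i
    · rw [if_pos hhi] at h1 ⊢
      have h2 := congrArg (Nat.cast : ℕ → ℚ) h1
      push_cast [Nat.cast_sub hcast] at h2
      rw [hQcard] at h2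
      linarith
    · rw [if_neg hhi] at h1 ⊢
      have h2 := congrArg (Nat.cast : ℕ → ℚ) h1
      push_cast [Nat.cast_sub hcast] at h2
      rw [hQcard] at h2
      linarith
  have hbm : m ≤ n + 1 := by omega
  have hbmj : m + j ≤ n + 1 := by omega
  -- diagonal entries
  have hdiagE : ∀ h : ℕ, h ≤ m - j + 1 → ∀ X : PointA F n,
      ((TmatA F n h)ᵀ * FmatA F n m j) X X
        = (q : ℚ) ^ j * (if h = m - j + 1 then (CCA F n h X : ℚ) else 0) := by
    intro h hh X
    rw [entry_eq, hQcard]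
    have hcastNN : ∀ i : ℕ, (NNA F n h i X X : ℚ)
        = if h = i then (CCA F n h X : ℚ) else 0 := by
      intro i
      rw [NNA_diag]
      split_ifs <;> simp
    rw [Finset.sum_congr rfl (fun i _ => hcastNN i),
      Finset.sum_congr rfl (fun i _ => hcastNN i),
      Finset.sum_ite_eq, Finset.sum_ite_eq]
    rw [if_neg (by simp only [Finset.mem_Icc]; omega :
      h ∉ Finset.Icc (m + 1) (m + j))]
    have : (if h ∈ Finset.Icc (m - j + 1) m then (CCA F n h X : ℚ) else 0)
        = if h = m - j + 1 then (CCA F n h X : ℚ) else 0 := by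
      by_cases hcase : h = m - j + 1
      · rw [if_pos hcase, if_pos (by simp only [Finset.mem_Icc]; omega)]
      · rw [if_neg hcase, if_neg (by simp only [Finset.mem_Icc]; omega)]
    rw [this]
    ring
  -- off-diagonal entries
  have hoffE : ∀ h : ℕ, 1 ≤ h → h ≤ m - j + 1 → ∀ X Y : PointA F n, X ≠ Y →
      ((Fintype.card (PointA F n) : ℚ) - 1) * (((TmatA F n h)ᵀ * FmatA F n m j) X Y)
        = -((q : ℚ) ^ j * (if h = m - j + 1 then (CCA F n h X : ℚ) else 0)) := by
    intro h hh1 hh2 X Y hXY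
    rw [entry_eq, hQcard]
    have hsA : ((Fintype.card (PointA F n) : ℚ) - 1)
          * (∑ i ∈ Finset.Icc (m - j + 1) m, (NNA F n h i X Y : ℚ))
        = (CCA F n h X : ℚ) * (∑ i ∈ Finset.Icc (m - j + 1) m, (q : ℚ) ^ (i - 1))
          - (if h = m - j + 1 then (CCA F n h X : ℚ) else 0) := by
      rw [Finset.mul_sum]
      rw [Finset.sum_congr rfl (fun i hi => hNNq h X Y hXY i
        (by simp only [Finset.mem_Icc] at hi; omega)
        (by simp only [Finset.mem_Icc] at hi; omega))]
      rw [Finset.sum_sub_distrib, ← Finset.mul_sum, Finset.sum_ite_eq]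
      congr 1
      by_cases hcase : h = m - j + 1
      · rw [if_pos hcase, if_pos (by simp only [Finset.mem_Icc]; omega)]
      · rw [if_neg hcase, if_neg (by simp only [Finset.mem_Icc]; omega)]
    have hsB : ((Fintype.card (PointA F n) : ℚ) - 1)
          * (∑ i ∈ Finset.Icc (m + 1) (m + j), (NNA F n h i X Y : ℚ))
        = (CCA F n h X : ℚ) * (∑ i ∈ Finset.Icc (m + 1) (m + j), (q : ℚ) ^ (i - 1)) := by
      rw [Finset.mul_sum]
      rw [Finset.sum_congr rfl (fun i hi => hNNq h X Y hXY i
        (by simp only [Finset.mem_Icc] at hi; omega)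
        (by simp only [Finset.mem_Icc] at hi; omega))]
      rw [Finset.sum_sub_distrib, ← Finset.mul_sum, Finset.sum_ite_eq]
      rw [if_neg (by simp only [Finset.mem_Icc]; omega : h ∉ Finset.Icc (m + 1) (m + j))]
      ring
    have hshift := shift_sum (q : ℚ) m j hj1 hj2
    calc ((Fintype.card (PointA F n) : ℚ) - 1)
          * ((q : ℚ) ^ j * (∑ i ∈ Finset.Icc (m - j + 1) m, (NNA F n h i X Y : ℚ))
            - ∑ i ∈ Finset.Icc (m + 1) (m + j), (NNA F n h i X Y : ℚ))
        = (q : ℚ) ^ j * (((Fintype.card (PointA F n) : ℚ) - 1)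
            * ∑ i ∈ Finset.Icc (m - j + 1) m, (NNA F n h i X Y : ℚ))
          - ((Fintype.card (PointA F n) : ℚ) - 1)
            * ∑ i ∈ Finset.Icc (m + 1) (m + j), (NNA F n h i X Y : ℚ) := by ring
      _ = -((q : ℚ) ^ j * (if h = m - j + 1 then (CCA F n h X : ℚ) else 0)) := by
          rw [hsA, hsB, ← hshift]
          ring
  constructor
  · -- part (i)
    intro h hh1 hh2 hlt
    ext X Y
    rw [Matrix.zero_apply]
    by_cases hXY : X = Y
    · subst hXY
      rw [hdiagE h (by omega) X, if_neg (by omega)]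
      ring
    · have h0 := hoffE h hh1 (by omega) X Y hXY
      rw [if_neg (by omega)] at h0
      simp only [mul_zero, neg_zero] at h0
      rcases mul_eq_zero.mp h0 with hc | hc
      · exact absurd hc hPm1
      · exact hc
  · -- part (ii)
    have hh1 : 1 ≤ m - j + 1 := by omega
    have hhle : m - j + 1 ≤ n + 1 := by omega
    ext X Y
    have hRHS : (((cA (q : ℚ) (n - 2) * (q : ℚ) ^ (m - 1)) •
        (vA (q : ℚ) n • (1 : Matrix (PointA F n) (PointA F n) ℚ) -
          Matrix.of (fun _ _ => (1 : ℚ)))) : Matrix (PointA F n) (PointA F n) ℚ) X Y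
        = cA (q : ℚ) (n - 2) * (q : ℚ) ^ (m - 1)
          * ((if X = Y then vA (q : ℚ) n else 0) - 1) := by
      simp [Matrix.smul_apply, Matrix.sub_apply, Matrix.one_apply, Matrix.of_apply,
        smul_eq_mul]
    rw [hRHS]
    by_cases hXY : X = Y
    · subst hXY
      rw [if_pos rfl, hdiagE _ le_rfl X, if_pos rfl, hCCval _ hh1 hhle X]
      rw [hvAn1]
      have hpow : (q : ℚ) ^ j * (q : ℚ) ^ (m - j + 1 - 1) = (q : ℚ) ^ (m - 1) * (q : ℚ) := by
        rw [← pow_add, ← pow_succ]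
        congr 1
        omega
      linear_combination cA (q : ℚ) (n - 2) * vA (q : ℚ) (n - 1) * hpow
    · rw [if_neg hXY]
      have h0 := hoffE _ hh1 le_rfl X Y hXY
      rw [if_pos rfl, hCCval _ hh1 hhle X] at h0
      apply mul_left_cancel₀ hPm1
      rw [h0, hPq, hvAn1]
      have hpow : (q : ℚ) ^ j * (q : ℚ) ^ (m - j + 1 - 1) = (q : ℚ) ^ (m - 1) * (q : ℚ) := by
        rw [← pow_add, ← pow_succ]
        congr 1
        omega
      linear_combination -cA (q : ℚ) (n - 2) * vA (q : ℚ) (n - 1) * hpow
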